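/- Let F and f be real-valued functions on [c,d] with F' = f almost everywhere on [c,d], and let u : [a,b] → [c,d] be such that u and F ∘ u are differentiable almost everywhere on [a,b]. If F maps sets of Lebesgue measure zero to sets of Lebesgue measure zero, then (F ∘ u)' = (f ∘ u) · u' almost everywhere on [a,b] (where on the set where f ∘ u is undefined the product is interpreted to be 0, which is valid since u' = 0 a.e. there). -/

import Mathlib

open MeasureTheory Set


/-- If `v` is expanding (anti-Lipschitz) on `C` and `v '' C` is null, then `C` is null. -/
lemma null_of_antilipschitz_image_null {v : ℝ → ℝ} {C : Set ℝ} {ε : ℝ} (hε : 0 < ε)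
    (hexp : ∀ x ∈ C, ∀ y ∈ C, ε * |x - y| ≤ |v x - v y|)
    (h0 : volume (v '' C) = 0) : volume C = 0 := by
  have hinj : InjOn v C := by
    intro x hx y hy hxy
    have h1 := hexp x hx y hy
    rw [hxy, sub_self, abs_zero] at h1
    have h2 : |x - y| ≤ 0 := by nlinarith [abs_nonneg (x - y)]
    rwa [abs_nonpos_iff, sub_eq_zero] at h2
  set K : NNReal := Real.toNNReal ε⁻¹ with hK
  set w := Function.invFunOn v C with hw
  have hmem : ∀ p ∈ v '' C, w p ∈ C ∧ v (w p) = p := by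
    rintro p ⟨x, hx, rfl⟩
    exact ⟨Function.invFunOn_mem ⟨x, hx, rfl⟩, Function.invFunOn_eq ⟨x, hx, rfl⟩⟩
  have hlip : LipschitzOnWith K w (v '' C) := by
    rw [lipschitzOnWith_iff_dist_le_mul]
    intro p hp q hq
    obtain ⟨hp1, hp2⟩ := hmem p hp
    obtain ⟨hq1, hq2⟩ := hmem q hq
    have h1 := hexp _ hp1 _ hq1
    rw [hp2, hq2] at h1
    have h2 : |w p - w q| ≤ ε⁻¹ * |p - q| := by
      rw [inv_mul_eq_div, le_div_iff₀ hε, mul_comm]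
      exact h1
    simpa [Real.dist_eq, hK, Real.coe_toNNReal _ (inv_nonneg.mpr hε.le)] using h2
  have hsub : C ⊆ w '' (v '' C) := fun x hx =>
    ⟨v x, mem_image_of_mem _ hx, hinj.leftInvOn_invFunOn hx⟩
  have hfin : volume C ≤ 0 := calc volume C ≤ volume (w '' (v '' C)) := measure_mono hsub
    _ = μH[1] (w '' (v '' C)) := by rw [MeasureTheory.hausdorffMeasure_real]
    _ ≤ (K : ENNReal) ^ (1:ℝ) * μH[1] (v '' C) :=
        hlip.hausdorffMeasure_image_le zero_le_one
    _ = (K : ENNReal) ^ (1:ℝ) * volume (v '' C) := by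
        rw [MeasureTheory.hausdorffMeasure_real]
    _ = 0 := by rw [h0, mul_zero]
  simpa using hfin

lemma deriv_zero_of_image_null {v g : ℝ → ℝ} {s : Set ℝ}
    (hv : ∀ t ∈ s, HasDerivWithinAt v (g t) s t)
    (h0 : volume (v '' s) = 0) : volume {t ∈ s | g t ≠ 0} = 0 := by
  have main : ∀ ε : ℝ, 0 < ε → volume {t ∈ s | ε ≤ |g t|} = 0 := by
    intro ε hε
    set A := {t ∈ s | ε ≤ |g t|} with hA
    have hAs : A ⊆ s := fun t ht => ht.1
    -- for each t ∈ A, a radius δ with the expansion property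
    have hrad : ∀ t ∈ A, ∃ δ > 0, ∀ y ∈ s, |y - t| < δ → ε / 2 * |y - t| ≤ |v y - v t| := by
      intro t ht
      have h := hv t ht.1
      have hlo := (hasDerivWithinAt_iff_isLittleO.mp h).def (half_pos hε)
      rw [Filter.eventually_iff, Metric.mem_nhdsWithin_iff] at hlo
      obtain ⟨δ, hδ, hδ'⟩ := hlo
      refine ⟨δ, hδ, fun y hy hyd => ?_⟩
      have h1 : ‖v y - v t - (y - t) • g t‖ ≤ ε / 2 * ‖y - t‖ :=
        hδ' ⟨by simpa [Metric.mem_ball, Real.dist_eq] using hyd, hy⟩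
      simp only [Real.norm_eq_abs, smul_eq_mul] at h1
      have h2 : ε * |y - t| ≤ |g t| * |y - t| :=
        mul_le_mul_of_nonneg_right ht.2 (abs_nonneg _)
      have h3 : |(y - t) * g t| - |v y - v t - (y - t) * g t| ≤ |v y - v t| := by
        have h5 := abs_sub_abs_le_abs_sub ((y - t) * g t) ((y - t) * g t - (v y - v t))
        have h4 : (y - t) * g t - ((y - t) * g t - (v y - v t)) = v y - v t := by ring
        rw [h4] at h5
        calc |(y - t) * g t| - |v y - v t - (y - t) * g t|
            = |(y - t) * g t| - |(y - t) * g t - (v y - v t)| := by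
              rw [abs_sub_comm (v y - v t)]
          _ ≤ |v y - v t| := h5
      rw [abs_mul, mul_comm (|y - t|)] at h3
      nlinarith [abs_nonneg (y - t)]
    -- countable decomposition into expanding pieces
    set D : ℕ → ℤ → Set ℝ := fun q k =>
      {t ∈ A ∩ Ico ((k : ℝ) * ((q : ℝ) + 1)⁻¹) (((k : ℝ) + 1) * ((q : ℝ) + 1)⁻¹) |
        ∀ y ∈ s, |y - t| < ((q : ℝ) + 1)⁻¹ → ε / 2 * |y - t| ≤ |v y - v t|} with hD
    have hsub : A ⊆ ⋃ (q : ℕ) (k : ℤ), D q k := by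
      intro t ht
      obtain ⟨δ, hδ, hP⟩ := hrad t ht
      obtain ⟨q, hq⟩ := exists_nat_one_div_lt hδ
      rw [one_div] at hq
      have hq1 : (0 : ℝ) < (q : ℝ) + 1 := by positivity
      refine mem_iUnion.2 ⟨q, mem_iUnion.2 ⟨⌊t * ((q : ℝ) + 1)⌋, ⟨⟨ht, ?_, ?_⟩,
        fun y hy hyd => hP y hy (hyd.trans hq)⟩⟩⟩
      · rw [mul_inv_le_iff₀ hq1] -- goal: k * (q+1)⁻¹ ≤ t
        exact Int.floor_le _
      · have h2 : t * ((q:ℝ)+1) * ((q:ℝ)+1)⁻¹ <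
            ((⌊t * ((q:ℝ)+1)⌋ : ℝ) + 1) * ((q:ℝ)+1)⁻¹ :=
          mul_lt_mul_of_pos_right (Int.lt_floor_add_one _) (inv_pos.mpr hq1)
        rwa [mul_assoc, mul_inv_cancel₀ hq1.ne', mul_one] at h2
    have hpiece : ∀ (q : ℕ) (k : ℤ), volume (D q k) = 0 := by
      intro q k
      refine null_of_antilipschitz_image_null (half_pos hε) ?_
        (measure_mono_null (image_mono (fun t ht => ht.1.1.1)) h0)
      intro x hx y hy
      have hxy : |y - x| < ((q : ℝ) + 1)⁻¹ := by
        obtain ⟨⟨_, hx1, hx2⟩, _⟩ := hx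
        obtain ⟨⟨_, hy1, hy2⟩, _⟩ := hy
        rw [abs_lt]
        constructor <;> nlinarith
      rw [abs_sub_comm x y, abs_sub_comm (v x) (v y)]
      exact hx.2 y hy.1.1.1 hxy
    exact measure_mono_null hsub
      (measure_iUnion_null fun q => measure_iUnion_null fun k => hpiece q k)
  have hcover : {t ∈ s | g t ≠ 0} ⊆ ⋃ n : ℕ, {t ∈ s | ((n : ℝ) + 1)⁻¹ ≤ |g t|} := by
    intro t ht
    obtain ⟨n, hn⟩ := exists_nat_one_div_lt (abs_pos.mpr ht.2)
    rw [one_div] at hn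
    exact mem_iUnion.2 ⟨n, ht.1, hn.le⟩
  exact measure_mono_null hcover (measure_iUnion_null fun n => main _ (by positivity))

/-- Serrin–Varberg chain rule: let `F, f : [c,d] → ℝ` with `F' = f` a.e. on `[c,d]`, and
let `u : [a,b] → [c,d]` be such that `u` (with a.e. derivative `u'`) and `F ∘ u` are
differentiable a.e. on `[a,b]`. If `F` maps sets of measure zero to sets of measure
zero, then `(F ∘ u)' = (f ∘ u) · u'` a.e. on `[a,b]`. -/
theorem serrin_varberg_chain_rule (a b c d : ℝ) (F f u u' : ℝ → ℝ)
    (hmaps : MapsTo u (Icc a b) (Icc c d))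
    (hF : ∀ᵐ x ∂(volume.restrict (Icc c d)), HasDerivWithinAt F (f x) (Icc c d) x)
    (hu : ∀ᵐ t ∂(volume.restrict (Icc a b)), HasDerivWithinAt u (u' t) (Icc a b) t)
    (hFu : ∀ᵐ t ∂(volume.restrict (Icc a b)),
      ∃ e : ℝ, HasDerivWithinAt (F ∘ u) e (Icc a b) t)
    (hnull : ∀ E ⊆ Icc c d, volume E = 0 → volume (F '' E) = 0) :
    ∀ᵐ t ∂(volume.restrict (Icc a b)),
      HasDerivWithinAt (F ∘ u) (f (u t) * u' t) (Icc a b) t := by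
  classical
  set E : Set ℝ := {x ∈ Icc c d | ¬ HasDerivWithinAt F (f x) (Icc c d) x} with hE
  have hEnull : volume E = 0 := by
    have h1 : volume.restrict (Icc c d) {x | ¬ HasDerivWithinAt F (f x) (Icc c d) x} = 0 := hF
    rw [Measure.restrict_apply' measurableSet_Icc] at h1
    have h2 : E = {x | ¬ HasDerivWithinAt F (f x) (Icc c d) x} ∩ Icc c d := by
      ext x; simp [hE, and_comm]
    rw [h2]; exact h1
  set e : ℝ → ℝ := fun t =>
    if h : ∃ e', HasDerivWithinAt (F ∘ u) e' (Icc a b) t then h.choose else 0 with he'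
  have he : ∀ᵐ t ∂(volume.restrict (Icc a b)), HasDerivWithinAt (F ∘ u) (e t) (Icc a b) t := by
    filter_upwards [hFu] with t ht
    simp only [he', dif_pos ht]
    exact ht.choose_spec
  set S : Set ℝ := {t ∈ Icc a b | u t ∈ E ∧ HasDerivWithinAt u (u' t) (Icc a b) t} with hSdef
  set S' : Set ℝ :=
    {t ∈ Icc a b | u t ∈ E ∧ HasDerivWithinAt (F ∘ u) (e t) (Icc a b) t} with hS'def
  have hS : volume {t ∈ S | u' t ≠ 0} = 0 := by
    refine deriv_zero_of_image_null (fun t ht => (ht.2.2).mono fun x hx => hx.1) ?_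
    refine measure_mono_null ?_ hEnull
    rintro _ ⟨t, ht, rfl⟩
    exact ht.2.1
  have hFE : volume (F '' E) = 0 := hnull E (fun x hx => hx.1) hEnull
  have hS' : volume {t ∈ S' | e t ≠ 0} = 0 := by
    refine deriv_zero_of_image_null (fun t ht => (ht.2.2).mono fun x hx => hx.1) ?_
    refine measure_mono_null ?_ hFE
    rintro _ ⟨t, ht, rfl⟩
    exact ⟨u t, ht.2.1, rfl⟩
  have hSae : ∀ᵐ t ∂(volume.restrict (Icc a b)), ¬ (t ∈ S ∧ u' t ≠ 0) :=
    (ae_mono Measure.restrict_le_self) (measure_eq_zero_iff_ae_notMem.mp hS)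
  have hS'ae : ∀ᵐ t ∂(volume.restrict (Icc a b)), ¬ (t ∈ S' ∧ e t ≠ 0) :=
    (ae_mono Measure.restrict_le_self) (measure_eq_zero_iff_ae_notMem.mp hS')
  have hmem : ∀ᵐ t ∂(volume.restrict (Icc a b)), t ∈ Icc a b :=
    ae_restrict_mem measurableSet_Icc
  filter_upwards [hmem, hu, he, hSae, hS'ae] with t htab htu hte htS htS'
  by_cases hcase : u t ∈ E
  · have hu'0 : u' t = 0 := by
      by_contra h; exact htS ⟨⟨htab, hcase, htu⟩, h⟩
    have he0 : e t = 0 := by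
      by_contra h; exact htS' ⟨⟨htab, hcase, hte⟩, h⟩
    have : f (u t) * u' t = e t := by rw [hu'0, he0, mul_zero]
    rw [this]; exact hte
  · have hder : HasDerivWithinAt F (f (u t)) (Icc c d) (u t) := by
      by_contra hcon
      exact hcase ⟨hmaps htab, hcon⟩
    exact hder.comp t htu hmaps
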